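/- Let (Z, Y, H, X) and (Z, X, G, W) be pre-wreath structures (so W ⊆ X ⊆ Y ⊆ Z, every element of G fixes every point outside X, and every element of H fixes every point outside Y). Then (Z, Y, ⟨G, H⟩, W) is a pre-wreath structure, where ⟨G, H⟩ is the subgroup of Sym(Z) generated by G and H. -/

import Mathlib

/-- A pre-wreath structure `(Z, Y, H, X)`: `H` is a nontrivial subgroup of `Sym(Z)`,
`X ⊆ Y ⊆ Z`, `X` nonempty, every element of `H` fixes every point outside `Y`,
if `Xh` meets `X` then `h` is the identity on `X`, and every nontrivial `h ∈ H`
moves some set `Xj` (`j ∈ H`). (Images are written with Lean's left action, so the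
set `Xh` of the paper is `⇑h '' X`.) -/
def IsPreWreath {Z : Type*} (Y : Set Z) (H : Subgroup (Equiv.Perm Z)) (X : Set Z) : Prop :=
  H ≠ ⊥ ∧
  (∀ h ∈ H, ∀ z : Z, z ∉ Y → h z = z) ∧
  X ⊆ Y ∧
  X.Nonempty ∧
  (∀ h ∈ H, (⇑h '' X ∩ X).Nonempty → ∀ x ∈ X, h x = x) ∧
  (∀ h ∈ H, h ≠ 1 → ∃ j ∈ H, ⇑h '' (⇑j '' X) ≠ ⇑j '' X)

/-- The carrier `XH = {Xh : h ∈ H}` of a pre-wreath structure. -/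
def wreathCarrier {Z : Type*} (H : Subgroup (Equiv.Perm Z)) (X : Set Z) : Set (Set Z) :=
  {A : Set Z | ∃ h ∈ H, A = ⇑h '' X}

/-- The support of a subgroup of `Sym(Z)`: the points moved by some element. -/
def Supp {Z : Type*} (K : Subgroup (Equiv.Perm Z)) : Set Z :=
  {z : Z | ∃ g ∈ K, g z ≠ z}

section StmtFiveHelpers
variable {Z : Type*}

theorem Equiv.Perm.apply_inv_self (g : Equiv.Perm Z) (x : Z) : g (g⁻¹ x) = x :=
  Equiv.apply_symm_apply g x

theorem Equiv.Perm.inv_apply_self (g : Equiv.Perm Z) (x : Z) : g⁻¹ (g x) = x :=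
  Equiv.symm_apply_apply g x

lemma stmt5_img_of_fix {f : Z → Z} {A : Set Z} (hf : ∀ a ∈ A, f a = a) : f '' A = A := by
  ext y
  constructor
  · rintro ⟨a, ha, rfl⟩; rw [hf a ha]; exact ha
  · intro hy; exact ⟨y, hy, hf y hy⟩

lemma stmt5_perm_img_of_fix_compl (g : Equiv.Perm Z) {X : Set Z}
    (hfix : ∀ z, z ∉ X → g z = z) : ⇑g '' X = X := by
  ext y
  constructor
  · rintro ⟨x, hx, rfl⟩
    by_contra hgx
    have h2 := hfix _ hgx
    have := g.injective h2
    rw [this] at hgx; exact hgx hx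
  · intro hy
    have h1 : g⁻¹ y ∈ X := by
      by_contra h
      have h2 := hfix _ h
      rw [Equiv.Perm.apply_inv_self] at h2
      rw [← h2] at h; exact h hy
    exact ⟨g⁻¹ y, h1, Equiv.Perm.apply_inv_self g y⟩

end StmtFiveHelpers

/-- If `(Z, Y, H, X)` and `(Z, X, G, W)` are pre-wreath structures,
then `(Z, Y, ⟨G, H⟩, W)` is a pre-wreath structure, where `⟨G, H⟩ = G ⊔ H` is the
subgroup of `Sym(Z)` generated by `G` and `H`. -/
theorem stmt5 {Z : Type*} (Y X W : Set Z) (H G : Subgroup (Equiv.Perm Z))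
    (hH : IsPreWreath Y H X) (hG : IsPreWreath X G W) :
    IsPreWreath Y (G ⊔ H) W := by
  obtain ⟨hHne, hHfix, hXY, hXne, hHint, hHmove⟩ := hH
  obtain ⟨hGne, hGfix, hWX, hWne, hGint, hGmove⟩ := hG
  -- basic tools
  have hcomp : ∀ (a b : Equiv.Perm Z) (s : Set Z), ⇑(a*b) '' s = ⇑a '' (⇑b '' s) := by
    intro a b s
    rw [Equiv.Perm.coe_mul, Set.image_comp]
  have gimg : ∀ g ∈ G, ⇑g '' X = X := fun g hg => stmt5_perm_img_of_fix_compl g (hGfix g hg)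
  have hdich : ∀ h ∈ H, (∀ x ∈ X, h x = x) ∨ (⇑h '' X ∩ X = ∅) := by
    intro h hh
    by_cases hc : (⇑h '' X ∩ X).Nonempty
    · exact Or.inl (hHint h hh hc)
    · exact Or.inr (Set.not_nonempty_iff_eq_empty.mp hc)
  have hinvfix : ∀ h : Equiv.Perm Z, (∀ x ∈ X, h x = x) → ∀ x ∈ X, h⁻¹ x = x := by
    intro h hid x hx
    calc h⁻¹ x = h⁻¹ (h x) := by rw [hid x hx]
    _ = x := Equiv.Perm.inv_apply_self h x
  have trans_dich : ∀ h₁ ∈ H, ∀ h₂ ∈ H,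
      ⇑h₁ '' X = ⇑h₂ '' X ∨ (⇑h₁ '' X) ∩ (⇑h₂ '' X) = ∅ := by
    intro h₁ hh₁ h₂ hh₂
    rcases hdich (h₂⁻¹*h₁) (mul_mem (inv_mem hh₂) hh₁) with hid | hdisj
    · left
      have h3 : ⇑(h₂⁻¹*h₁) '' X = X := stmt5_img_of_fix hid
      have h4 : ⇑h₂ '' (⇑(h₂⁻¹*h₁) '' X) = ⇑h₂ '' X := by rw [h3]
      rw [← hcomp] at h4
      rwa [show h₂*(h₂⁻¹*h₁) = h₁ by group] at h4
    · right
      apply Set.eq_empty_iff_forall_notMem.mpr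
      rintro y ⟨⟨x₁, hx₁, he₁⟩, x₂, hx₂, he₂⟩
      have hmem : (h₂⁻¹*h₁) x₁ ∈ (⇑(h₂⁻¹*h₁) '' X) ∩ X := by
        constructor
        · exact ⟨x₁, hx₁, rfl⟩
        · simp only [Equiv.Perm.mul_apply]
          rw [he₁, ← he₂, Equiv.Perm.inv_apply_self]
          exact hx₂
      rw [hdisj] at hmem
      exact hmem
  have htY : ∀ h₀ ∈ H, ∀ x ∈ X, h₀ x ∈ Y := by
    intro h₀ hh₀ x hx
    by_contra hc
    have h1 := hHfix h₀ hh₀ _ hc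
    have h2 := h₀.injective h1
    rw [h2] at hc
    exact hc (hXY hx)
  -- the generating set of the "base group" N
  set S : Set (Equiv.Perm Z) := {p | ∃ h ∈ H, ∃ g ∈ G, p = h * g * h⁻¹} with hSdef
  have Nconj : ∀ h₀ ∈ H, ∀ n ∈ Subgroup.closure S, h₀ * n * h₀⁻¹ ∈ Subgroup.closure S := by
    intro h₀ hh₀ n hn
    induction hn using Subgroup.closure_induction with
    | mem x hx =>
        obtain ⟨h, hh, g, hg, rfl⟩ := hx
        have he : h₀ * (h * g * h⁻¹) * h₀⁻¹ = (h₀*h) * g * (h₀*h)⁻¹ := by group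
        rw [he]
        exact Subgroup.subset_closure ⟨h₀*h, mul_mem hh₀ hh, g, hg, rfl⟩
    | one => simpa using (Subgroup.closure S).one_mem
    | mul x y hx hy ihx ihy =>
        have he : h₀ * (x*y) * h₀⁻¹ = (h₀*x*h₀⁻¹)*(h₀*y*h₀⁻¹) := by group
        rw [he]; exact mul_mem ihx ihy
    | inv x hx ihx =>
        have he : h₀ * x⁻¹ * h₀⁻¹ = (h₀*x*h₀⁻¹)⁻¹ := by group
        rw [he]; exact inv_mem ihx
  -- every element of N agrees with an element of G on X
  have Na : ∀ n ∈ Subgroup.closure S, ∃ g ∈ G, ∀ x ∈ X, n x = g x := by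
    intro n hn
    induction hn using Subgroup.closure_induction with
    | mem p hp =>
        obtain ⟨h, hh, g, hg, rfl⟩ := hp
        rcases hdich h hh with hid | hdisj
        · refine ⟨g, hg, fun x hx => ?_⟩
          have h1 : h⁻¹ x = x := hinvfix h hid x hx
          have h2 : g x ∈ X := by rw [← gimg g hg]; exact ⟨x, hx, rfl⟩
          simp only [Equiv.Perm.mul_apply]
          rw [h1, hid _ h2]
        · refine ⟨1, G.one_mem, fun x hx => ?_⟩
          have h1 : h⁻¹ x ∉ X := by
            intro hc
            have hmem : x ∈ ⇑h '' X ∩ X := ⟨⟨h⁻¹ x, hc, Equiv.Perm.apply_inv_self h x⟩, hx⟩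
            rw [hdisj] at hmem
            exact hmem
          simp only [Equiv.Perm.mul_apply, Equiv.Perm.one_apply]
          rw [hGfix g hg _ h1, Equiv.Perm.apply_inv_self]
    | one => exact ⟨1, G.one_mem, fun x _ => rfl⟩
    | mul a b ha hb iha ihb =>
        obtain ⟨g₁, hg₁, e₁⟩ := iha
        obtain ⟨g₂, hg₂, e₂⟩ := ihb
        refine ⟨g₁*g₂, mul_mem hg₁ hg₂, fun x hx => ?_⟩
        have h2 : g₂ x ∈ X := by rw [← gimg g₂ hg₂]; exact ⟨x, hx, rfl⟩
        simp only [Equiv.Perm.mul_apply]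
        rw [e₂ x hx, e₁ _ h2]
    | inv a ha iha =>
        obtain ⟨g, hg, e⟩ := iha
        refine ⟨g⁻¹, inv_mem hg, fun x hx => ?_⟩
        have h2 : g⁻¹ x ∈ X := by rw [← gimg g⁻¹ (inv_mem hg)]; exact ⟨x, hx, rfl⟩
        have h3 : a (g⁻¹ x) = x := by rw [e _ h2, Equiv.Perm.apply_inv_self]
        calc a⁻¹ x = a⁻¹ (a (g⁻¹ x)) := by rw [h3]
        _ = g⁻¹ x := Equiv.Perm.inv_apply_self a _
  -- every element of N preserves each H-translate of X
  have Nb : ∀ n ∈ Subgroup.closure S, ∀ h₀ ∈ H, ⇑n '' (⇑h₀ '' X) = ⇑h₀ '' X := by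
    intro n hn
    induction hn using Subgroup.closure_induction with
    | mem p hp =>
        intro h₀ hh₀
        obtain ⟨h, hh, g, hg, rfl⟩ := hp
        rcases trans_dich h hh h₀ hh₀ with heq | hdisj
        · rw [← heq]
          have e1 : ⇑h⁻¹ '' (⇑h '' X) = X := by
            rw [← hcomp]; simp
          rw [hcomp (h*g) h⁻¹, e1, hcomp, gimg g hg]
        · apply stmt5_img_of_fix
          intro a ha
          have h1 : h⁻¹ a ∉ X := by
            intro hc
            have hmem : a ∈ (⇑h '' X) ∩ (⇑h₀ '' X) := ⟨⟨h⁻¹ a, hc, Equiv.Perm.apply_inv_self h a⟩, ha⟩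
            rw [hdisj] at hmem
            exact hmem
          simp only [Equiv.Perm.mul_apply]
          rw [hGfix g hg _ h1, Equiv.Perm.apply_inv_self]
    | one => intro h₀ _; simp
    | mul a b ha hb iha ihb =>
        intro h₀ hh₀
        rw [hcomp, ihb h₀ hh₀, iha h₀ hh₀]
    | inv a ha iha =>
        intro h₀ hh₀
        have h1 := iha h₀ hh₀
        calc ⇑a⁻¹ '' (⇑h₀ '' X) = ⇑a⁻¹ '' (⇑a '' (⇑h₀ '' X)) := by rw [h1]
        _ = ⇑h₀ '' X := by rw [← hcomp]; simp
  -- every element of N fixes every point outside all translates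
  have Nc : ∀ n ∈ Subgroup.closure S, ∀ z : Z, (∀ h₀ ∈ H, z ∉ ⇑h₀ '' X) → n z = z := by
    intro n hn
    induction hn using Subgroup.closure_induction with
    | mem p hp =>
        intro z hz
        obtain ⟨h, hh, g, hg, rfl⟩ := hp
        have h1 : h⁻¹ z ∉ X := by
          intro hc
          exact hz h hh ⟨h⁻¹ z, hc, Equiv.Perm.apply_inv_self h z⟩
        simp only [Equiv.Perm.mul_apply]
        rw [hGfix g hg _ h1, Equiv.Perm.apply_inv_self]
    | one => intro z _; rfl
    | mul a b ha hb iha ihb =>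
        intro z hz
        simp only [Equiv.Perm.mul_apply]
        rw [ihb z hz, iha z hz]
    | inv a ha iha =>
        intro z hz
        have h1 := iha z hz
        calc a⁻¹ z = a⁻¹ (a z) := by rw [h1]
        _ = z := Equiv.Perm.inv_apply_self a z
  -- decomposition of elements of G ⊔ H
  have Tdecomp : ∀ k ∈ G ⊔ H, ∃ h ∈ H, ∃ n ∈ Subgroup.closure S, k = h * n := by
    intro k hk
    let T : Subgroup (Equiv.Perm Z) :=
      { carrier := {k | ∃ h ∈ H, ∃ n ∈ Subgroup.closure S, k = h * n}
        one_mem' := ⟨1, H.one_mem, 1, (Subgroup.closure S).one_mem, by simp⟩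
        mul_mem' := by
          rintro a b ⟨h₁, hh₁, n₁, hn₁, rfl⟩ ⟨h₂, hh₂, n₂, hn₂, rfl⟩
          refine ⟨h₁*h₂, mul_mem hh₁ hh₂, (h₂⁻¹*n₁*h₂)*n₂, mul_mem ?_ hn₂, by group⟩
          have h1 := Nconj h₂⁻¹ (inv_mem hh₂) n₁ hn₁
          simpa using h1
        inv_mem' := by
          rintro a ⟨h, hh, n, hn, rfl⟩
          exact ⟨h⁻¹, inv_mem hh, h*n⁻¹*h⁻¹, Nconj h hh n⁻¹ (inv_mem hn), by group⟩ }
    have hle : G ⊔ H ≤ T := by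
      apply sup_le
      · intro g hg
        exact ⟨1, H.one_mem, g,
          Subgroup.subset_closure ⟨1, H.one_mem, g, hg, by group⟩, by group⟩
      · intro h hh
        exact ⟨h, hh, 1, (Subgroup.closure S).one_mem, by simp⟩
    exact hle hk
  -- now prove the six conditions
  refine ⟨?_, ?_, fun w hw => hXY (hWX hw), hWne, ?_, ?_⟩
  · -- G ⊔ H ≠ ⊥
    intro hbot
    apply hGne
    have h1 : G ≤ ⊥ := hbot ▸ (le_sup_left : G ≤ G ⊔ H)
    exact le_bot_iff.mp h1
  · -- fixes everything outside Y
    intro k hk z hz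
    obtain ⟨h, hh, n, hn, rfl⟩ := Tdecomp k hk
    have hzt : ∀ h₀ ∈ H, z ∉ ⇑h₀ '' X := by
      rintro h₀ hh₀ ⟨x, hx, rfl⟩
      exact hz (htY h₀ hh₀ x hx)
    have h2 : n z = z := Nc n hn z hzt
    simp only [Equiv.Perm.mul_apply]
    rw [h2, hHfix h hh z hz]
  · -- intersection condition
    intro k hk hne w hw
    obtain ⟨h, hh, n, hn, rfl⟩ := Tdecomp k hk
    obtain ⟨g, hg, hgn⟩ := Na n hn
    obtain ⟨y, ⟨w₀, hw₀, hy⟩, hyW⟩ := hne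
    have hgw₀X : g w₀ ∈ X := by rw [← gimg g hg]; exact ⟨w₀, hWX hw₀, rfl⟩
    have hyval : h (g w₀) = y := by
      rw [← hgn w₀ (hWX hw₀)]
      simpa [Equiv.Perm.mul_apply] using hy
    have hid : ∀ x ∈ X, h x = x :=
      hHint h hh ⟨y, ⟨g w₀, hgw₀X, hyval⟩, hWX hyW⟩
    have hkg : ∀ x ∈ X, (h*n) x = g x := by
      intro x hx
      have hgx : g x ∈ X := by rw [← gimg g hg]; exact ⟨x, hx, rfl⟩
      simp only [Equiv.Perm.mul_apply]
      rw [hgn x hx, hid _ hgx]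
    have hgWint : (⇑g '' W ∩ W).Nonempty := by
      refine ⟨y, ⟨w₀, hw₀, ?_⟩, hyW⟩
      rw [← hkg w₀ (hWX hw₀)]
      exact hy
    have hidW := hGint g hg hgWint
    rw [hkg w (hWX hw), hidW w hw]
  · -- moving condition
    intro k hk hkne
    obtain ⟨h, hh, n, hn, rfl⟩ := Tdecomp k hk
    by_cases hone : h = 1
    · subst hone
      by_cases hmX : ∃ x ∈ X, n x ≠ x
      · -- n moves a point of X : use G's moving condition
        obtain ⟨x, hxX, hnx⟩ := hmX
        obtain ⟨g, hg, hgn⟩ := Na n hn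
        have hgne : g ≠ 1 := by
          intro hg1
          apply hnx
          rw [hgn x hxX, hg1, Equiv.Perm.one_apply]
        obtain ⟨j, hj, hjne⟩ := hGmove g hg hgne
        refine ⟨j, (le_sup_left : G ≤ G ⊔ H) hj, ?_⟩
        have hjW : ⇑j '' W ⊆ X := by
          rw [← gimg j hj]; exact Set.image_mono hWX
        have himg : ⇑((1 : Equiv.Perm Z)*n) '' (⇑j '' W) = ⇑g '' (⇑j '' W) := by
          rw [one_mul]
          exact Set.image_congr fun u hu => hgn u (hjW hu)
        rw [himg]
        exact hjne
      · -- n fixes X pointwise, but moves a point of some translate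
        push_neg at hmX
        have hnne : n ≠ 1 := by
          intro h1; apply hkne; rw [h1, one_mul]
        obtain ⟨z, hz⟩ : ∃ z, n z ≠ z := by
          by_contra hc
          push_neg at hc
          exact hnne (Equiv.ext fun x => (hc x).trans (Equiv.Perm.one_apply x).symm)
        have hzt : ∃ h₀ ∈ H, z ∈ ⇑h₀ '' X := by
          by_contra hc
          push_neg at hc
          exact hz (Nc n hn z hc)
        obtain ⟨h₀, hh₀, x₀, hx₀X, hzx⟩ := hzt
        have hn' : h₀⁻¹ * n * h₀ ∈ Subgroup.closure S := by
          have h1 := Nconj h₀⁻¹ (inv_mem hh₀) n hn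
          simpa using h1
        obtain ⟨g', hg', hgn'⟩ := Na _ hn'
        have hmoves : (h₀⁻¹ * n * h₀) x₀ ≠ x₀ := by
          simp only [Equiv.Perm.mul_apply]
          rw [hzx]
          intro hc
          apply hz
          calc n z = h₀ (h₀⁻¹ (n z)) := (Equiv.Perm.apply_inv_self h₀ _).symm
          _ = h₀ x₀ := by rw [hc]
          _ = z := hzx
        have hg'ne : g' ≠ 1 := by
          intro h1
          apply hmoves
          rw [hgn' x₀ hx₀X, h1, Equiv.Perm.one_apply]
        obtain ⟨j, hj, hjne⟩ := hGmove g' hg' hg'ne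
        refine ⟨h₀ * j,
          mul_mem ((le_sup_right : H ≤ G ⊔ H) hh₀) ((le_sup_left : G ≤ G ⊔ H) hj), ?_⟩
        have hjW : ⇑j '' W ⊆ X := by
          rw [← gimg j hj]; exact Set.image_mono hWX
        have e1 : ⇑(h₀⁻¹*n*h₀) '' (⇑j '' W) = ⇑g' '' (⇑j '' W) :=
          Set.image_congr fun u hu => hgn' u (hjW hu)
        rw [one_mul]
        intro hc
        apply hjne
        have e2 : ⇑n '' (⇑(h₀*j) '' W) = ⇑h₀ '' (⇑(h₀⁻¹*n*h₀) '' (⇑j '' W)) := by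
          calc ⇑n '' (⇑(h₀*j) '' W) = ⇑(n*(h₀*j)) '' W := (hcomp _ _ _).symm
          _ = ⇑(h₀*((h₀⁻¹*n*h₀)*j)) '' W := by
              rw [show n*(h₀*j) = h₀*((h₀⁻¹*n*h₀)*j) by group]
          _ = ⇑h₀ '' (⇑((h₀⁻¹*n*h₀)*j) '' W) := hcomp _ _ _
          _ = ⇑h₀ '' (⇑(h₀⁻¹*n*h₀) '' (⇑j '' W)) := by rw [hcomp]
        rw [e2, e1] at hc
        have e3 : ⇑(h₀*j) '' W = ⇑h₀ '' (⇑j '' W) := hcomp _ _ _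
        rw [e3] at hc
        exact Set.image_injective.mpr h₀.injective hc
    · -- h ≠ 1 : use H's moving condition
      obtain ⟨j, hj, hjne⟩ := hHmove h hh hone
      refine ⟨j, (le_sup_right : H ≤ G ⊔ H) hj, ?_⟩
      have hdisjX : (⇑h '' (⇑j '' X)) ∩ (⇑j '' X) = ∅ := by
        rcases trans_dich (h*j) (mul_mem hh hj) j hj with heq | hd
        · rw [hcomp] at heq
          exact absurd heq hjne
        · rw [← hcomp]; exact hd
      intro hc
      have hsub : ⇑(h*n) '' (⇑j '' W) ⊆ ⇑h '' (⇑j '' X) := by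
        rw [hcomp]
        apply Set.image_mono
        have h1 : ⇑n '' (⇑j '' W) ⊆ ⇑n '' (⇑j '' X) :=
          Set.image_mono (Set.image_mono hWX)
        rwa [Nb n hn j hj] at h1
      obtain ⟨w₀, hw₀⟩ := hWne
      have h1 : j w₀ ∈ ⇑j '' W := ⟨w₀, hw₀, rfl⟩
      have h2 : j w₀ ∈ ⇑(h*n) '' (⇑j '' W) := by rw [hc]; exact h1
      have h3 : j w₀ ∈ (⇑h '' (⇑j '' X)) ∩ (⇑j '' X) :=
        ⟨hsub h2, ⟨w₀, hWX hw₀, rfl⟩⟩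
      rw [hdisjX] at h3
      exact h3
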